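/- Let (s_k, γ_k), k = 1, 2, …, be i.i.d. pairs of positive real random variables with E[s_1/(1+γ_1^{-1})] < ∞ and E[γ_1^{-1} s_1^2] < ∞, and let σ_θ^2 > 0 and P_tot > 0 be constants. Define for each K the equal-power BLUE distortion Var_K = σ_θ^2 · ( Σ_{k=1}^K P_tot s_k / (γ_1^{-1} P_tot s_k + K(1+γ_k^{-1})) )^{-1} (with γ_k^{-1} in the k-th term). Then almost surely Var_K converges, as K → ∞, to D_∞ := σ_θ^2 / ( P_tot · E[s_1/(1+γ_1^{-1})] ). -/

import Mathlib

open MeasureTheory ProbabilityTheory Finset Filter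

lemma aux_low (P s g K : ℝ) (hP : 0 < P) (hs : 0 < s) (hg : 0 < g) (hK : 1 ≤ K) :
    P * s / (K * (1 + g)) - P ^ 2 * (g * s ^ 2) / K ^ 2 ≤
      P * s / (g * P * s + K * (1 + g)) := by
  have hK0 : 0 < K := lt_of_lt_of_le one_pos hK
  have hb : (0:ℝ) < 1 + g := by linarith
  have hKb : 0 < K * (1 + g) := mul_pos hK0 hb
  have hd : 0 < g * P * s + K * (1 + g) := by positivity
  have heq : P * s / (K * (1 + g)) - P * s / (g * P * s + K * (1 + g))
      = P * s * (g * P * s) / ((K * (1 + g)) * (g * P * s + K * (1 + g))) := by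
    field_simp
    ring
  have hDen : K ^ 2 ≤ (K * (1 + g)) * (g * P * s + K * (1 + g)) := by
    nlinarith [mul_pos hg (mul_pos hP hs), mul_pos hK0 hg]
  have hbound : P * s * (g * P * s) / ((K * (1 + g)) * (g * P * s + K * (1 + g)))
      ≤ P * s * (g * P * s) / K ^ 2 :=
    div_le_div_of_nonneg_left (by positivity) (by positivity) hDen
  have hEq2 : P * s * (g * P * s) / K ^ 2 = P ^ 2 * (g * s ^ 2) / K ^ 2 := by ring
  linarith [heq ▸ hbound, hEq2]

/-- Almost-sure convergence of the equal-power BLUE distortion: for i.i.d. pairs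
`(s_k, γ_k)` of positive random variables with `E[s_1/(1+γ_1⁻¹)] < ∞` and
`E[γ_1⁻¹ s_1²] < ∞`, the distortion
`Var_K = σ_θ² (∑_{k=1}^K P_tot s_k/(γ_k⁻¹ P_tot s_k + K(1+γ_k⁻¹)))⁻¹`
converges almost surely to `D_∞ = σ_θ²/(P_tot · E[s_1/(1+γ_1⁻¹)])`. -/
theorem stmt_0 {Ω : Type*} [MeasurableSpace Ω] (μ : Measure Ω)
    [IsProbabilityMeasure μ] (X : ℕ → Ω → ℝ × ℝ)
    (hmeas : ∀ k, Measurable (X k))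
    (hindep : iIndepFun X μ)
    (hident : ∀ k, IdentDistrib (X k) (X 0) μ μ)
    (hpos : ∀ k ω, 0 < (X k ω).1 ∧ 0 < (X k ω).2)
    (hint1 : Integrable (fun ω => (X 0 ω).1 / (1 + ((X 0 ω).2)⁻¹)) μ)
    (hint2 : Integrable (fun ω => ((X 0 ω).2)⁻¹ * (X 0 ω).1 ^ 2) μ)
    (σθsq Ptot : ℝ) (hσ : 0 < σθsq) (hP : 0 < Ptot) :
    ∀ᵐ ω ∂μ, Tendsto
      (fun K : ℕ => σθsq *
        (∑ k ∈ range K, Ptot * (X k ω).1 /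
          (((X k ω).2)⁻¹ * Ptot * (X k ω).1 + K * (1 + ((X k ω).2)⁻¹)))⁻¹)
      atTop
      (nhds (σθsq / (Ptot * ∫ ω, (X 0 ω).1 / (1 + ((X 0 ω).2)⁻¹) ∂μ))) := by
  set f : ℝ × ℝ → ℝ := fun p => p.1 / (1 + p.2⁻¹) with hf_def
  set g : ℝ × ℝ → ℝ := fun p => p.2⁻¹ * p.1 ^ 2 with hg_def
  have hfm : Measurable f := measurable_fst.div (measurable_const.add measurable_snd.inv)
  have hgm : Measurable g := (measurable_snd.inv).mul (measurable_fst.pow measurable_const)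
  set Y : ℕ → Ω → ℝ := fun k ω => f (X k ω) with hY_def
  set Z : ℕ → Ω → ℝ := fun k ω => g (X k ω) with hZ_def
  have hYindep : Pairwise (Function.onFun (IndepFun · · μ) Y) := fun i j hij =>
    (hindep.indepFun hij).comp hfm hfm
  have hZindep : Pairwise (Function.onFun (IndepFun · · μ) Z) := fun i j hij =>
    (hindep.indepFun hij).comp hgm hgm
  have hYident : ∀ k, IdentDistrib (Y k) (Y 0) μ μ := fun k => (hident k).comp hfm
  have hZident : ∀ k, IdentDistrib (Z k) (Z 0) μ μ := fun k => (hident k).comp hgm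
  have hYint : Integrable (Y 0) μ := hint1
  have hZint : Integrable (Z 0) μ := hint2
  have h1 := strong_law_ae_real Y hYint hYindep hYident
  have h2 := strong_law_ae_real Z hZint hZindep hZident
  set m : ℝ := ∫ ω, (X 0 ω).1 / (1 + ((X 0 ω).2)⁻¹) ∂μ with hm_def
  have hYpos : ∀ ω, 0 < Y 0 ω := by
    intro ω
    have h1 := (hpos 0 ω).1
    have h2 := (hpos 0 ω).2
    have : 0 < 1 + ((X 0 ω).2)⁻¹ := by positivity
    exact div_pos h1 this
  have hm_pos : 0 < m := by
    rw [hm_def]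
    rw [show (fun ω => (X 0 ω).1 / (1 + ((X 0 ω).2)⁻¹)) = Y 0 from rfl]
    rw [integral_pos_iff_support_of_nonneg (fun ω => (hYpos ω).le) hYint]
    have : Function.support (Y 0) = Set.univ :=
      Set.eq_univ_of_forall fun ω => (hYpos ω).ne'
    simp [this]
  filter_upwards [h1, h2] with ω h1ω h2ω
  -- the sum in question
  set S : ℕ → ℝ := fun K => ∑ k ∈ range K, Ptot * (X k ω).1 /
      (((X k ω).2)⁻¹ * Ptot * (X k ω).1 + K * (1 + ((X k ω).2)⁻¹)) with hS_def
  set U : ℕ → ℝ := fun K => Ptot * ((∑ k ∈ range K, Y k ω) / K) with hU_def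
  set L : ℕ → ℝ := fun K => U K - (1 / K) * (Ptot ^ 2 * ((∑ k ∈ range K, Z k ω) / K))
    with hL_def
  have hU_tend : Tendsto U atTop (nhds (Ptot * m)) := h1ω.const_mul Ptot
  have hL_tend : Tendsto L atTop (nhds (Ptot * m)) := by
    have hz : Tendsto (fun K : ℕ => (1 / (K:ℝ)) * (Ptot ^ 2 * ((∑ k ∈ range K, Z k ω) / K)))
        atTop (nhds (0 * (Ptot ^ 2 * (∫ x, Z 0 x ∂μ)))) :=
      tendsto_one_div_atTop_nhds_zero_nat.mul (h2ω.const_mul (Ptot ^ 2))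
    rw [zero_mul] at hz
    have := hU_tend.sub hz
    rw [sub_zero] at this
    exact this
  have hbpos : ∀ k, (0:ℝ) < 1 + ((X k ω).2)⁻¹ := by
    intro k
    have := (hpos k ω).2
    positivity
  have hUrw : ∀ K : ℕ, U K = ∑ k ∈ range K, Ptot * (X k ω).1 /
      ((K:ℝ) * (1 + ((X k ω).2)⁻¹)) := by
    intro K
    have : U K = ∑ k ∈ range K, Ptot * Y k ω / (K:ℝ) := by
      simp only [hU_def]
      rw [← sum_div, ← mul_sum, mul_div_assoc]
    rw [this]
    refine sum_congr rfl fun k hk => ?_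
    have hb := hbpos k
    simp only [hY_def, hf_def]
    rw [← mul_div_assoc, div_div, mul_comm (1 + ((X k ω).2)⁻¹) (K:ℝ)]
  have hSU : ∀ᶠ K in atTop, S K ≤ U K := by
    filter_upwards [eventually_ge_atTop 1] with K hK
    have hK0 : (0:ℝ) < K := by exact_mod_cast hK
    rw [hUrw K]
    refine sum_le_sum fun k hk => ?_
    have hs := (hpos k ω).1
    have hgi : 0 < ((X k ω).2)⁻¹ := inv_pos.mpr (hpos k ω).2
    have hb := hbpos k
    refine div_le_div_of_nonneg_left (by positivity) (by positivity) ?_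
    nlinarith [mul_pos (mul_pos hgi hP) hs]
  have hLS : ∀ᶠ K in atTop, L K ≤ S K := by
    filter_upwards [eventually_ge_atTop 1] with K hK
    have hK1 : (1:ℝ) ≤ K := by exact_mod_cast hK
    have hK0 : (0:ℝ) < K := lt_of_lt_of_le one_pos hK1
    have e2 : (1 / (K:ℝ)) * (Ptot ^ 2 * ((∑ k ∈ range K, Z k ω) / K)) =
        ∑ k ∈ range K, Ptot ^ 2 * (((X k ω).2)⁻¹ * (X k ω).1 ^ 2) / (K:ℝ) ^ 2 := by
      simp only [hZ_def, hg_def]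
      rw [← sum_div, ← mul_sum]
      field_simp
      try ring
      try exact Or.inl trivial
    have hLrw : L K = ∑ k ∈ range K, (Ptot * (X k ω).1 / ((K:ℝ) * (1 + ((X k ω).2)⁻¹))
        - Ptot ^ 2 * (((X k ω).2)⁻¹ * (X k ω).1 ^ 2) / (K:ℝ) ^ 2) := by
      have : L K = U K - (1 / K) * (Ptot ^ 2 * ((∑ k ∈ range K, Z k ω) / K)) := rfl
      rw [this, hUrw K, e2, ← sum_sub_distrib]
    rw [hLrw]
    refine sum_le_sum fun k hk => ?_
    exact aux_low Ptot (X k ω).1 ((X k ω).2)⁻¹ K hP (hpos k ω).1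
      (inv_pos.mpr (hpos k ω).2) hK1
  have hS_tend : Tendsto S atTop (nhds (Ptot * m)) :=
    tendsto_of_tendsto_of_tendsto_of_le_of_le' hL_tend hU_tend hLS hSU
  have hPm : Ptot * m ≠ 0 := (mul_pos hP hm_pos).ne'
  have hfin := (hS_tend.inv₀ hPm).const_mul σθsq
  rw [← div_eq_mul_inv] at hfin
  exact hfin
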